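/- Let d ≥ 1 and h ≥ 1 be integers, let M be an integer with M > 4h, and fix a root vertex o of the hypercube Q_d. Then the map f ↦ (f mod M) is a bijection from the set {f : V(Q_d) → ℤ : f(o) = 0 and |f(u) − f(v)| ≤ h for every edge uv of Q_d} onto the set {φ : V(Q_d) → ℤ/Mℤ : φ(o) = 0 and for every edge uv of Q_d, φ(u) − φ(v) lies in the image of {−h, −h+1, …, h} under reduction mod M}. -/

import Mathlib

noncomputable section

/-- The hypercube graph `Q_d`: vertices are 0/1-vectors of length `d`, adjacent when
they differ in exactly one coordinate. -/
def hypercube (d : ℕ) : SimpleGraph (Fin d → Bool) where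
  Adj u v := hammingDist u v = 1
  symm := ⟨fun u v h => by show hammingDist v u = 1; rw [hammingDist_comm]; exact h⟩
  loopless := ⟨fun v h => by simp [hammingDist_self] at h⟩

namespace Stmt18Aux

lemma adj_of_single {d : ℕ} {u v : Fin d → Bool} (i : Fin d) (h1 : u i ≠ v i)
    (h2 : ∀ j, j ≠ i → u j = v j) : (hypercube d).Adj u v := by
  show hammingDist u v = 1
  have : ({j | u j ≠ v j} : Finset (Fin d)) = {i} := by
    ext j
    simp only [Finset.mem_filter, Finset.mem_univ, true_and, Finset.mem_singleton,
      Set.mem_setOf_eq]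
    constructor
    · intro hj; by_contra hji; exact hj (h2 j hji)
    · rintro rfl; exact h1
  rw [hammingDist, this, Finset.card_singleton]

lemma single_of_adj {d : ℕ} {u v : Fin d → Bool} (ha : (hypercube d).Adj u v) :
    ∃ j, u j ≠ v j ∧ ∀ i, i ≠ j → u i = v i := by
  have h1 : ({i | u i ≠ v i} : Finset (Fin d)).card = 1 := ha
  obtain ⟨j, hj⟩ := Finset.card_eq_one.mp h1
  refine ⟨j, ?_, ?_⟩
  · have hjmem : j ∈ ({i | u i ≠ v i} : Finset (Fin d)) := hj ▸ Finset.mem_singleton_self j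
    exact (Finset.mem_filter.mp hjmem).2
  · intro i hij
    by_contra hne
    have himem : i ∈ ({i | u i ≠ v i} : Finset (Fin d)) :=
      Finset.mem_filter.mpr ⟨Finset.mem_univ i, hne⟩
    rw [hj, Finset.mem_singleton] at himem
    exact hij himem

lemma rep_unique {h M : ℕ} (hM : 2 * h < M) {a b : ℤ} (ha1 : -(h:ℤ) ≤ a) (ha2 : a ≤ h)
    (hb1 : -(h:ℤ) ≤ b) (hb2 : b ≤ h) (hab : (a : ZMod M) = b) : a = b := by
  have hdvd : (M : ℤ) ∣ a - b := by
    have : ((a - b : ℤ) : ZMod M) = 0 := by push_cast; rw [hab]; ring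
    exact (ZMod.intCast_zmod_eq_zero_iff_dvd _ _).mp this
  have : |a - b| < (M : ℤ) := by rw [abs_sub_lt_iff]; omega
  have := Int.eq_zero_of_abs_lt_dvd hdvd this
  omega

variable {d h M : ℕ}

def Ok (φ : (Fin d → Bool) → ZMod M) (h : ℕ) (x y : Fin d → Bool) : Prop :=
  ∃ a : ℤ, -(h:ℤ) ≤ a ∧ a ≤ h ∧ φ y - φ x = (a : ZMod M)

open Classical in
def lift (φ : (Fin d → Bool) → ZMod M) (h : ℕ) (x y : Fin d → Bool) : ℤ :=
  if H : Ok φ h x y then H.choose else 0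

variable (φ : (Fin d → Bool) → ZMod M)

lemma lift_spec {x y : Fin d → Bool} (H : Ok φ h x y) :
    -(h:ℤ) ≤ lift φ h x y ∧ lift φ h x y ≤ h ∧ φ y - φ x = (lift φ h x y : ZMod M) := by
  rw [lift, dif_pos H]; exact H.choose_spec

lemma ok_self (x : Fin d → Bool) : Ok φ h x x :=
  ⟨0, by simp, by simp, by simp⟩

lemma lift_self (hM : 2 * h < M) (x : Fin d → Bool) : lift φ h x x = 0 := by
  obtain ⟨h1, h2, h3⟩ := lift_spec φ (ok_self φ x) (h := h)
  refine rep_unique hM h1 h2 (by simp) (by simp) ?_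
  rw [← h3]; simp

lemma lift_skew (hM : 2 * h < M) {x y : Fin d → Bool} (H1 : Ok φ h x y) (H2 : Ok φ h y x) :
    lift φ h x y = - lift φ h y x := by
  obtain ⟨h1, h2, h3⟩ := lift_spec φ H1
  obtain ⟨g1, g2, g3⟩ := lift_spec φ H2
  refine rep_unique hM h1 h2 (by omega) (by omega) ?_
  push_cast
  rw [← h3, ← g3]; ring

lemma lift_square (hM : 4 * h < M) {x1 x2 x3 x4 : Fin d → Bool}
    (H1 : Ok φ h x1 x2) (H2 : Ok φ h x2 x3) (H3 : Ok φ h x3 x4) (H4 : Ok φ h x4 x1) :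
    lift φ h x1 x2 + lift φ h x2 x3 + lift φ h x3 x4 + lift φ h x4 x1 = 0 := by
  obtain ⟨a1, a2, a3⟩ := lift_spec φ H1
  obtain ⟨b1, b2, b3⟩ := lift_spec φ H2
  obtain ⟨c1, c2, c3⟩ := lift_spec φ H3
  obtain ⟨e1, e2, e3⟩ := lift_spec φ H4
  have hcast : ((lift φ h x1 x2 + lift φ h x2 x3 + lift φ h x3 x4 + lift φ h x4 x1 : ℤ) :
      ZMod M) = 0 := by
    push_cast
    rw [← a3, ← b3, ← c3, ← e3]; ring
  have hdvd : (M : ℤ) ∣ _ := (ZMod.intCast_zmod_eq_zero_iff_dvd _ _).mp hcast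
  have habs : |lift φ h x1 x2 + lift φ h x2 x3 + lift φ h x3 x4 + lift φ h x4 x1| < (M : ℤ) := by
    rw [abs_lt]; omega
  exact Int.eq_zero_of_abs_lt_dvd hdvd habs

/-- Partial interpolation between `o` and `v`: agrees with `v` on coordinates `< k`. -/
def pp (o v : Fin d → Bool) (k : ℕ) : Fin d → Bool :=
  fun i => if (i : ℕ) < k then v i else o i

variable {o : Fin d → Bool}

lemma pp_zero (v : Fin d → Bool) : pp o v 0 = o := by
  funext i; simp [pp]

lemma pp_top (v : Fin d → Bool) : pp o v d = v := by
  funext i; simp [pp, i.isLt]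

lemma pp_self (k : ℕ) : pp o o k = o := by
  funext i; simp [pp]

lemma pp_succ_eq {v : Fin d → Bool} {n : ℕ} (hvo : ∀ i : Fin d, (i : ℕ) = n → v i = o i) :
    pp o v (n+1) = pp o v n := by
  funext i
  simp only [pp]
  rcases lt_trichotomy (i : ℕ) n with hlt | heq | hgt
  · rw [if_pos (by omega), if_pos hlt]
  · rw [if_pos (by omega), if_neg (by omega), hvo i heq]
  · rw [if_neg (by omega), if_neg (by omega)]

lemma pp_succ_adj {v : Fin d → Bool} {n : ℕ} (i : Fin d) (hi : (i : ℕ) = n)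
    (hvo : v i ≠ o i) : (hypercube d).Adj (pp o v n) (pp o v (n+1)) := by
  apply adj_of_single i
  · simp only [pp]
    rw [if_neg (by omega), if_pos (by omega)]
    exact fun e => hvo e.symm
  · intro j hji
    have : (j : ℕ) ≠ n := fun e => hji (Fin.ext (by omega))
    simp only [pp]
    rcases lt_trichotomy (j : ℕ) n with hlt | heq | hgt
    · rw [if_pos hlt, if_pos (by omega)]
    · exact absurd heq this
    · rw [if_neg (by omega), if_neg (by omega)]

lemma ok_step (hφ : ∀ u v, (hypercube d).Adj u v → Ok φ h u v) (v : Fin d → Bool) (n : ℕ) :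
    Ok φ h (pp o v n) (pp o v (n+1)) := by
  by_cases hc : ∀ i : Fin d, (i : ℕ) = n → v i = o i
  · rw [pp_succ_eq hc]; exact ok_self φ _
  · push_neg at hc
    obtain ⟨i, hi, hvo⟩ := hc
    exact hφ _ _ (pp_succ_adj i hi hvo)

lemma pp_eq_of_le {u v : Fin d → Bool} {j : Fin d} (hother : ∀ i, i ≠ j → u i = v i)
    {k : ℕ} (hk : k ≤ (j : ℕ)) : pp o u k = pp o v k := by
  funext i
  simp only [pp]
  by_cases hik : (i : ℕ) < k
  · rw [if_pos hik, if_pos hik, hother i (fun e => by subst e; omega)]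
  · rw [if_neg hik, if_neg hik]

lemma pp_adj_of_lt {u v : Fin d → Bool} {j : Fin d} (hne : u j ≠ v j)
    (hother : ∀ i, i ≠ j → u i = v i) {k : ℕ} (hk : (j : ℕ) < k) :
    (hypercube d).Adj (pp o v k) (pp o u k) := by
  apply adj_of_single j
  · simp only [pp, if_pos hk]
    exact fun e => hne e.symm
  · intro i hij
    simp only [pp]
    by_cases hik : (i : ℕ) < k
    · rw [if_pos hik, if_pos hik, hother i hij]
    · rw [if_neg hik, if_neg hik]

/-- The integer lift along the canonical path from `o` to `v`. -/
def S (φ : (Fin d → Bool) → ZMod M) (h : ℕ) (o v : Fin d → Bool) (n : ℕ) : ℤ :=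
  ∑ k ∈ Finset.range n, lift φ h (pp o v k) (pp o v (k+1))

lemma S_cast (hφ : ∀ u v, (hypercube d).Adj u v → Ok φ h u v) (v : Fin d → Bool) (n : ℕ) :
    ((S φ h o v n : ℤ) : ZMod M) = φ (pp o v n) - φ (pp o v 0) := by
  rw [S]
  push_cast
  rw [show (∑ k ∈ Finset.range n, (lift φ h (pp o v k) (pp o v (k+1)) : ZMod M))
      = ∑ k ∈ Finset.range n, (φ (pp o v (k+1)) - φ (pp o v k)) from
    Finset.sum_congr rfl fun k _ => ((lift_spec φ (ok_step φ hφ v k)).2.2).symm]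
  exact Finset.sum_range_sub (fun k => φ (pp o v k)) n

lemma S_self (hM : 2 * h < M) (n : ℕ) : S φ h o o n = 0 := by
  rw [S]
  apply Finset.sum_eq_zero
  intro k _
  rw [pp_self, pp_self]
  exact lift_self φ hM _

/-- Key lemma: the difference of the lifts along canonical paths to adjacent vertices. -/
lemma S_sub (hM : 4 * h < M) (hφ : ∀ u v, (hypercube d).Adj u v → Ok φ h u v)
    {u v : Fin d → Bool} (j : Fin d) (hne : u j ≠ v j) (hother : ∀ i, i ≠ j → u i = v i) :
    ∀ n, n ≤ d → S φ h o u n - S φ h o v n =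
      if (j : ℕ) < n then lift φ h (pp o v n) (pp o u n) else 0 := by
  have hM2 : 2 * h < M := by omega
  intro n
  induction n with
  | zero => intro _; simp [S]
  | succ n ih =>
    intro hnd
    have hnd' : n < d := hnd
    have ihn := ih (by omega)
    set fn : Fin d := ⟨n, hnd'⟩ with hfn
    have hfnn : (fn : ℕ) = n := rfl
    rw [S, S, Finset.sum_range_succ, Finset.sum_range_succ, ← S, ← S]
    rcases lt_trichotomy (j : ℕ) n with hlt | heq | hgt
    · rw [if_pos hlt] at ihn
      rw [if_pos (by omega)]
      by_cases hvo : u fn = o fn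
      · have huv : v fn = o fn := by
          rw [← hother fn (fun e => by rw [e] at hfnn; omega)]; exact hvo
        have e1 : pp o u (n+1) = pp o u n :=
          pp_succ_eq (fun i hi => by rwa [show i = fn from Fin.ext (by omega)])
        have e2 : pp o v (n+1) = pp o v n :=
          pp_succ_eq (fun i hi => by rwa [show i = fn from Fin.ext (by omega)])
        rw [e1, e2, lift_self φ hM2, lift_self φ hM2]
        omega
      · -- square case
        have hvv : v fn ≠ o fn := by
          rw [← hother fn (fun e => by rw [e] at hfnn; omega)]; exact hvo
        have H12 : Ok φ h (pp o v n) (pp o u n) := hφ _ _ (pp_adj_of_lt hne hother hlt)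
        have H21 : Ok φ h (pp o u n) (pp o v n) :=
          hφ _ _ ((hypercube d).adj_symm (pp_adj_of_lt hne hother hlt))
        have H23 : Ok φ h (pp o u n) (pp o u (n+1)) := hφ _ _ (pp_succ_adj fn rfl hvo)
        have H34 : Ok φ h (pp o u (n+1)) (pp o v (n+1)) :=
          hφ _ _ ((hypercube d).adj_symm (pp_adj_of_lt hne hother (by omega)))
        have H43 : Ok φ h (pp o v (n+1)) (pp o u (n+1)) :=
          hφ _ _ (pp_adj_of_lt hne hother (by omega))
        have H41 : Ok φ h (pp o v (n+1)) (pp o v n) :=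
          hφ _ _ ((hypercube d).adj_symm (pp_succ_adj fn rfl hvv))
        have H14 : Ok φ h (pp o v n) (pp o v (n+1)) := hφ _ _ (pp_succ_adj fn rfl hvv)
        have sq := lift_square φ hM H12 H23 H34 H41
        have sk1 := lift_skew φ hM2 H34 H43
        have sk2 := lift_skew φ hM2 H41 H14
        omega
    · rw [if_neg (by omega)] at ihn
      rw [if_pos (by omega)]
      have hjfn : j = fn := Fin.ext (by omega)
      have hw : pp o u n = pp o v n := pp_eq_of_le hother (by omega)
      by_cases huo : u j = o j
      · have hvno : v j ≠ o j := fun e => hne (by rw [huo, e])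
        have e1 : pp o u (n+1) = pp o u n :=
          pp_succ_eq (fun i hi => by rw [show i = j from Fin.ext (by omega)]; exact huo)
        have Hadj : (hypercube d).Adj (pp o v n) (pp o v (n+1)) :=
          pp_succ_adj j (by omega) hvno
        have H1 : Ok φ h (pp o v n) (pp o v (n+1)) := hφ _ _ Hadj
        have H2 : Ok φ h (pp o v (n+1)) (pp o v n) := hφ _ _ ((hypercube d).adj_symm Hadj)
        have sk := lift_skew φ hM2 H1 H2
        rw [e1, hw, lift_self φ hM2]
        omega
      · have hvo : v j = o j := by
          cases hbv : v j <;> cases hbu : u j <;> cases hbo : o j <;>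
            simp_all
        have e2 : pp o v (n+1) = pp o v n :=
          pp_succ_eq (fun i hi => by rw [show i = j from Fin.ext (by omega)]; exact hvo)
        have Hadj : (hypercube d).Adj (pp o u n) (pp o u (n+1)) :=
          pp_succ_adj j (by omega) (fun e => huo e)
        rw [e2, ← hw, lift_self φ hM2]
        omega
    · rw [if_neg (by omega)] at ihn
      rw [if_neg (by omega)]
      have e1 : pp o u n = pp o v n := pp_eq_of_le hother (by omega)
      have e2 : pp o u (n+1) = pp o v (n+1) := pp_eq_of_le hother (by omega)
      rw [e1, e2]
      omega

end Stmt18Aux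

open Stmt18Aux in
/-- Rooted `h`-Lipschitz functions on `Q_d` biject with rooted homomorphism-type maps
to `ℤ/Mℤ` whose edge increments are reductions of integers in `[−h, h]`, provided
`M > 4h`. -/
theorem stmt_18 (d h M : ℕ) (hd : 1 ≤ d) (hh : 1 ≤ h) (hM : 4 * h < M)
    (o : Fin d → Bool) :
    Set.BijOn (fun (f : (Fin d → Bool) → ℤ) (v : Fin d → Bool) => ((f v : ℤ) : ZMod M))
      {f : (Fin d → Bool) → ℤ | f o = 0 ∧
        ∀ u v, (hypercube d).Adj u v → |f u - f v| ≤ (h : ℤ)}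
      {φ : (Fin d → Bool) → ZMod M | φ o = 0 ∧
        ∀ u v, (hypercube d).Adj u v →
          ∃ a : ℤ, -(h : ℤ) ≤ a ∧ a ≤ (h : ℤ) ∧ φ u - φ v = (a : ZMod M)} := by
  have hM2 : 2 * h < M := by omega
  refine ⟨?_, ?_, ?_⟩
  · -- MapsTo
    rintro f ⟨hf0, hfl⟩
    refine ⟨by simp [hf0], ?_⟩
    intro u v hadj
    have hb := abs_le.mp (hfl u v hadj)
    exact ⟨f u - f v, hb.1, hb.2, by push_cast; ring⟩
  · -- InjOn
    rintro f ⟨hf0, hfl⟩ g ⟨hg0, hgl⟩ heq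
    funext v
    have key : ∀ k, k ≤ d → f (pp o v k) = g (pp o v k) := by
      intro k
      induction k with
      | zero => intro _; rw [pp_zero, hf0, hg0]
      | succ k ih =>
        intro hk
        have ihk := ih (by omega)
        by_cases hc : ∀ i : Fin d, (i : ℕ) = k → v i = o i
        · rw [pp_succ_eq hc]; exact ihk
        · push_neg at hc
          obtain ⟨i, hi, hvo⟩ := hc
          have hadj := pp_succ_adj (o := o) i hi hvo
          have h1 := abs_le.mp (hfl _ _ hadj)
          have h2 := abs_le.mp (hgl _ _ hadj)
          have hcast : ((f (pp o v (k+1)) : ℤ) : ZMod M) = ((g (pp o v (k+1)) : ℤ) : ZMod M) :=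
            congrFun heq (pp o v (k+1))
          have hdvd : (M : ℤ) ∣ f (pp o v (k+1)) - g (pp o v (k+1)) := by
            apply (ZMod.intCast_zmod_eq_zero_iff_dvd _ _).mp
            push_cast
            rw [hcast]; ring
          have habs : |f (pp o v (k+1)) - g (pp o v (k+1))| < (M : ℤ) := by
            rw [abs_lt]
            push_cast at hM ⊢
            omega
          have := Int.eq_zero_of_abs_lt_dvd hdvd habs
          omega
    have := key d (le_refl d)
    rwa [pp_top] at this
  · -- SurjOn
    rintro φ ⟨hφ0, hφe⟩
    have hOk : ∀ u v, (hypercube d).Adj u v → Ok φ h u v := by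
      intro u v hadj
      obtain ⟨a, h1, h2, h3⟩ := hφe v u ((hypercube d).adj_symm hadj)
      exact ⟨a, h1, h2, h3⟩
    refine ⟨fun v => S φ h o v d, ⟨?_, ?_⟩, ?_⟩
    · exact S_self φ hM2 d
    · intro u v hadj
      obtain ⟨j, hne, hother⟩ := single_of_adj hadj
      have hsum := S_sub φ (o := o) hM hOk j hne hother d (le_refl d)
      rw [if_pos j.isLt, pp_top, pp_top] at hsum
      obtain ⟨hb1, hb2, _⟩ := lift_spec φ (hOk v u ((hypercube d).adj_symm hadj))
      show |S φ h o u d - S φ h o v d| ≤ (h : ℤ)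
      rw [hsum, abs_le]
      exact ⟨hb1, hb2⟩
    · funext v
      have := S_cast φ (o := o) hOk v d
      rw [pp_top, pp_zero, hφ0, sub_zero] at this
      exact this

end
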